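/- arXiv:1707.06344 — 9 statements merged into one kernel-verified Lean document; each statement's English description precedes it below -/
import Mathlib

section
/- Let G be a linearly ordered abelian group, n a positive integer, and a ∈ G with a ∉ nG. Then the collection of convex subgroups H of G such that a ∉ H + nG is nonempty and has a greatest element (with respect to inclusion). (This element is denoted H_n(a).) -/
/-- A subgroup `H` of a linearly ordered abelian group is convex if
`0 ≤ g ≤ h` with `h ∈ H` implies `g ∈ H`. -/
def IsConvexSubgroup {G : Type*} [AddCommGroup G] [LinearOrder G] [IsOrderedAddMonoid G] (H : AddSubgroup G) : Prop :=
  ∀ g h : G, h ∈ H → 0 ≤ g → g ≤ h → g ∈ H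

/-- `a` lies in `H + nG`, i.e. `a = h + n•g` for some `h ∈ H` and `g ∈ G`. -/
def MemAddNSMul {G : Type*} [AddCommGroup G] (H : AddSubgroup G) (n : ℕ) (a : G) : Prop :=
  ∃ h ∈ H, ∃ g : G, a = h + n • g

lemma convex_total {G : Type*} [AddCommGroup G] [LinearOrder G] [IsOrderedAddMonoid G] {H K : AddSubgroup G}
    (hH : IsConvexSubgroup H) (hK : IsConvexSubgroup K) : H ≤ K ∨ K ≤ H := by
  by_cases h : H ≤ K
  · exact Or.inl h
  · right
    obtain ⟨x, hxH, hxK⟩ := SetLike.not_le_iff_exists.mp h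
    intro y hyK
    rcases le_total |y| |x| with hle | hle
    · exact abs_mem_iff.mp (hH _ _ (abs_mem_iff.mpr hxH) (abs_nonneg y) hle)
    · exact absurd (abs_mem_iff.mp (hK _ _ (abs_mem_iff.mpr hyK)
        (abs_nonneg x) hle)) hxK

/-- For `a ∉ nG`, the collection of convex subgroups `H` with `a ∉ H + nG` is nonempty
and has a greatest element `H_n(a)`. -/
theorem exists_greatest_convex_subgroup {G : Type*} [AddCommGroup G] [LinearOrder G] [IsOrderedAddMonoid G]
    (n : ℕ) (hn : 0 < n) (a : G) (ha : ¬ ∃ g : G, a = n • g) :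
    ∃ A : AddSubgroup G, IsConvexSubgroup A ∧ ¬ MemAddNSMul A n a ∧
      ∀ H : AddSubgroup G, IsConvexSubgroup H → ¬ MemAddNSMul H n a → H ≤ A := by
  set P : AddSubgroup G → Prop := fun H => IsConvexSubgroup H ∧ ¬ MemAddNSMul H n a with hP
  have hbot : P ⊥ := by
    constructor
    · intro g h hh hg hgh
      simp only [AddSubgroup.mem_bot] at hh ⊢
      exact le_antisymm (hgh.trans_eq hh) hg
    · rintro ⟨h, hh, g, hg⟩
      simp only [AddSubgroup.mem_bot] at hh
      exact ha ⟨g, by simpa [hh] using hg⟩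
  refine ⟨{ carrier := {x | ∃ H, P H ∧ x ∈ H}
            zero_mem' := ⟨⊥, hbot, AddSubgroup.zero_mem ⊥⟩
            add_mem' := ?_
            neg_mem' := ?_ }, ?_, ?_, ?_⟩
  · rintro x y ⟨H, hH, hxH⟩ ⟨K, hK, hyK⟩
    rcases convex_total hH.1 hK.1 with hle | hle
    · exact ⟨K, hK, K.add_mem (hle hxH) hyK⟩
    · exact ⟨H, hH, H.add_mem hxH (hle hyK)⟩
  · rintro x ⟨H, hH, hxH⟩
    exact ⟨H, hH, H.neg_mem hxH⟩
  · rintro g h ⟨H, hH, hhH⟩ hg hgh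
    exact ⟨H, hH, hH.1 g h hhH hg hgh⟩
  · rintro ⟨h, ⟨H, hH, hhH⟩, g, hg⟩
    exact hH.2 ⟨h, hhH, g, hg⟩
  · rintro H hH hHa x hx
    exact ⟨H, ⟨hH, hHa⟩, hx⟩
end

section
/- Let G be a linearly ordered abelian group and p a positive integer such that the quotient group G/pG is finite. Then the set of subgroups of G of the form H_p(a) — that is, the set of convex subgroups A for which there exists a ∈ G with a ∉ A + pG and such that every convex subgroup H with a ∉ H + pG satisfies H ⊆ A — is finite. -/
/-- The subgroup `nG = {n • g : g ∈ G}` of an abelian group `G`. -/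
def nSMulSubgroup (G : Type*) [AddCommGroup G] (n : ℕ) : AddSubgroup G where
  carrier := Set.range fun g : G => n • g
  zero_mem' := ⟨0, smul_zero n⟩
  add_mem' := by
    rintro _ _ ⟨g, rfl⟩ ⟨g', rfl⟩
    exact ⟨g + g', smul_add n g g'⟩
  neg_mem' := by
    rintro _ ⟨g, rfl⟩
    exact ⟨-g, by simp [smul_neg]⟩

theorem mem_transfer {G : Type*} [AddCommGroup G] (H : AddSubgroup G) (p : ℕ) (a g : G)
    (h : MemAddNSMul H p a) : MemAddNSMul H p (a + p • g) := by
  obtain ⟨h0, hh0, g', rfl⟩ := h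
  exact ⟨h0, hh0, g' + g, by rw [smul_add, add_assoc]⟩

/-- If `G/pG` is finite then there are only finitely many subgroups of the form `H_p(a)`. -/
theorem finitely_many_Hp {G : Type*} [AddCommGroup G] [LinearOrder G] [IsOrderedAddMonoid G]
    (p : ℕ) (hp : 0 < p) (hfin : Finite (G ⧸ nSMulSubgroup G p)) :
    {A : AddSubgroup G | IsConvexSubgroup A ∧ ∃ a : G, ¬ MemAddNSMul A p a ∧
      ∀ H : AddSubgroup G, IsConvexSubgroup H → ¬ MemAddNSMul H p a → H ≤ A}.Finite := by
  set S := {A : AddSubgroup G | IsConvexSubgroup A ∧ ∃ a : G, ¬ MemAddNSMul A p a ∧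
      ∀ H : AddSubgroup G, IsConvexSubgroup H → ¬ MemAddNSMul H p a → H ≤ A} with hS
  rw [← Set.finite_coe_iff]
  let f : S → G ⧸ nSMulSubgroup G p := fun A => QuotientAddGroup.mk A.2.2.choose
  have hinj : Function.Injective f := by
    rintro ⟨A, hAc, hA⟩ ⟨B, hBc, hB⟩ hfeq
    simp only [f, QuotientAddGroup.eq] at hfeq
    obtain ⟨g, hg⟩ := hfeq
    have hg' : p • g = -hA.choose + hB.choose := hg
    have hb : hB.choose = hA.choose + p • g := by
      rw [hg']; abel
    have ha : hA.choose = hB.choose + p • (-g) := by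
      rw [hb, smul_neg]; abel
    obtain ⟨hAn, hAmax⟩ := hA.choose_spec
    obtain ⟨hBn, hBmax⟩ := hB.choose_spec
    have hBa : ¬ MemAddNSMul B p hA.choose := fun h => hBn (hb ▸ mem_transfer B p _ g h)
    have hAb : ¬ MemAddNSMul A p hB.choose := fun h => hAn (ha ▸ mem_transfer A p _ (-g) h)
    exact Subtype.ext (le_antisymm (hBmax A hAc hAb) (hAmax B hBc hBa))
  exact Finite.of_injective f hinj
end

section
/- Let G be a linearly ordered abelian group, p a positive integer, and a, b ∈ G. Suppose A is a convex subgroup with a ∉ A + pG such that every convex subgroup H with a ∉ H + pG satisfies H ⊆ A (i.e., A = H_p(a)), and B is a convex subgroup with b ∉ B + pG such that every convex subgroup H with b ∉ H + pG satisfies H ⊆ B (i.e., B = H_p(b)). If A is strictly contained in B, then there exists a' ∈ B such that a' ∉ A + pG and every convex subgroup H with a' ∉ H + pG satisfies H ⊆ A (i.e., H_p(a') = A = H_p(a)). -/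
/-- If `H_p(a) = A ⊊ B = H_p(b)`, then there is `a' ∈ B` with `H_p(a') = A`. -/
theorem exists_coord_in_larger {G : Type*} [AddCommGroup G] [LinearOrder G] [IsOrderedAddMonoid G]
    (p : ℕ) (hp : 0 < p) (a b : G)
    (A : AddSubgroup G) (hAconv : IsConvexSubgroup A) (hAa : ¬ MemAddNSMul A p a)
    (hAmax : ∀ H : AddSubgroup G, IsConvexSubgroup H → ¬ MemAddNSMul H p a → H ≤ A)
    (B : AddSubgroup G) (hBconv : IsConvexSubgroup B) (hBb : ¬ MemAddNSMul B p b)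
    (hBmax : ∀ H : AddSubgroup G, IsConvexSubgroup H → ¬ MemAddNSMul H p b → H ≤ B)
    (hAB : A < B) :
    ∃ a' ∈ B, ¬ MemAddNSMul A p a' ∧
      ∀ H : AddSubgroup G, IsConvexSubgroup H → ¬ MemAddNSMul H p a' → H ≤ A := by
  have hBa : MemAddNSMul B p a := by
    by_contra hcon
    exact absurd (hAmax B hBconv hcon) (not_le_of_gt hAB)
  obtain ⟨h, hhB, g, hg⟩ := hBa
  refine ⟨h, hhB, ?_, ?_⟩
  · rintro ⟨h', hh', g', hg'⟩
    exact hAa ⟨h', hh', g' + g, by rw [hg, hg', smul_add, add_assoc]⟩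
  · intro H hHconv hHa'
    apply hAmax H hHconv
    rintro ⟨h'', hh'', g'', hg''⟩
    exact hHa' ⟨h'', hh'', g'' - g, by
      have e : h + p • g = h'' + p • g'' := hg.symm.trans hg''
      rw [smul_sub]
      have : h = h'' + (p • g'' - p • g) := by
        rw [← sub_eq_iff_eq_add'] at e ⊢
        rw [← e]; abel
      exact this⟩
end

section
/- Let G be a linearly ordered abelian group, p a prime, i a natural number, and let E ⊆ F be convex subgroups of G. Suppose f₀, f₁ ∈ G satisfy f₀ ∈ F and f₁ ∉ F + pG. Then p^i•f₀ - p^i•f₁ ∉ E + p^{i+1}G. -/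
lemma mem_of_nsmul_mem {G : Type*} [AddCommGroup G] [LinearOrder G] [IsOrderedAddMonoid G]
    {E : AddSubgroup G} (hE : IsConvexSubgroup E) {n : ℕ} (hn : 1 ≤ n)
    {x : G} (hx : n • x ∈ E) : x ∈ E := by
  have step : ∀ y : G, 0 ≤ y → y ≤ n • y := fun y hy => by
    simpa using nsmul_le_nsmul_left hy hn
  rcases le_total 0 x with h | h
  · exact hE x (n • x) hx h (step x h)
  · have hx' : n • (-x) ∈ E := by
      rw [smul_neg]; exact E.neg_mem hx
    have : -x ∈ E :=
      hE (-x) (n • (-x)) hx' (neg_nonneg.2 h) (step (-x) (neg_nonneg.2 h))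
    simpa using E.neg_mem this

/-- If `E ⊆ F` are convex, `f₀ ∈ F` and `f₁ ∉ F + pG`,
then `p^i•f₀ - p^i•f₁ ∉ E + p^{i+1}G`. -/
theorem row_inconsistency {G : Type*} [AddCommGroup G] [LinearOrder G] [IsOrderedAddMonoid G]
    (p : ℕ) (hp : p.Prime) (i : ℕ) (E F : AddSubgroup G)
    (hEconv : IsConvexSubgroup E) (hFconv : IsConvexSubgroup F) (hEF : E ≤ F)
    (f₀ f₁ : G) (hf₀ : f₀ ∈ F) (hf₁ : ¬ MemAddNSMul F p f₁) :
    ¬ MemAddNSMul E (p ^ (i + 1)) (p ^ i • f₀ - p ^ i • f₁) := by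
  rintro ⟨e, he, g, hg⟩
  apply hf₁
  have key : p ^ i • (f₀ - f₁ - p • g) = e := by
    have h1 : p ^ (i + 1) • g = p ^ i • (p • g) := by
      rw [pow_succ, mul_smul]
    rw [h1] at hg
    rw [smul_sub, smul_sub, sub_eq_iff_eq_add]
    exact hg
  have hxE : f₀ - f₁ - p • g ∈ E :=
    mem_of_nsmul_mem hEconv (Nat.one_le_iff_ne_zero.2 (pow_ne_zero i hp.ne_zero))
      (key ▸ he)
  have hxF : f₀ - f₁ - p • g ∈ F := hEF hxE
  refine ⟨f₀ - (f₀ - f₁ - p • g), F.sub_mem hf₀ hxF, -g, ?_⟩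
  simp [smul_neg]
  abel
end

section
/- Let G be a linearly ordered abelian group, p a prime, and n, m positive integers. Suppose given convex subgroups E_1 ⊆ E_2 ⊆ ⋯ ⊆ E_{n+1} of G, and for each i ∈ {1, …, n} and j ∈ {1, …, m} a convex subgroup F_{i,j} and an element f_{i,j} ∈ G such that: E_i ⊆ F_{i,1}; F_{i,j} ⊆ F_{i,j+1} for j < m; F_{i,m} ⊆ E_{i+1}; f_{i,j} ∉ F_{i,j} + pG for all j; f_{i,j} ∈ F_{i,j+1} for j < m; and f_{i,m} ∈ E_{i+1}. Set c_{i,j} := p^i•f_{i,j}. Then for every function η : {1, …, n} → {1, …, m} there exists a ∈ G such that for all i ∈ {1, …, n} and j ∈ {1, …, m}: a - c_{i,j} ∈ E_i + p^{i+1}G if and only if j = η(i). -/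
private lemma conv_of_nsmul_mem {G : Type*} [AddCommGroup G] [LinearOrder G] [IsOrderedAddMonoid G] {H : AddSubgroup G}
    (hH : IsConvexSubgroup H) {k : ℕ} (hk : 1 ≤ k) {x : G} (hx : k • x ∈ H) : x ∈ H := by
  rcases le_total 0 x with h0 | h0
  · refine hH x (k • x) hx h0 ?_
    calc x = 1 • x := (one_nsmul x).symm
      _ ≤ k • x := nsmul_le_nsmul_left h0 hk
  · have hneg : k • (-x) ∈ H := by rw [smul_neg]; exact H.neg_mem hx
    have h1 : (-x) ∈ H := by
      refine hH (-x) (k • (-x)) hneg (by simpa using h0) ?_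
      calc (-x) = 1 • (-x) := (one_nsmul _).symm
        _ ≤ k • (-x) := nsmul_le_nsmul_left (by simpa using h0) hk
    simpa using H.neg_mem h1

/-- The inp-pattern configuration: given chains of convex subgroups `E_i` and `F_{i,j}`
with witnesses `f_{i,j} ∉ F_{i,j} + pG`, for every choice function `η` there is an `a`
congruent to `c_{i,j} = p^i • f_{i,j}` modulo `E_i + p^{i+1}G` exactly when `j = η i`. -/
theorem inp_pattern {G : Type*} [AddCommGroup G] [LinearOrder G] [IsOrderedAddMonoid G]
    (p : ℕ) (hp : p.Prime) (n m : ℕ) (hn : 0 < n) (hm : 0 < m)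
    (E : ℕ → AddSubgroup G) (F : ℕ → ℕ → AddSubgroup G) (f : ℕ → ℕ → G)
    (hEconv : ∀ i, 1 ≤ i → i ≤ n + 1 → IsConvexSubgroup (E i))
    (hEchain : ∀ i, 1 ≤ i → i ≤ n → E i ≤ E (i + 1))
    (hFconv : ∀ i j, 1 ≤ i → i ≤ n → 1 ≤ j → j ≤ m → IsConvexSubgroup (F i j))
    (hEF : ∀ i, 1 ≤ i → i ≤ n → E i ≤ F i 1)
    (hFchain : ∀ i j, 1 ≤ i → i ≤ n → 1 ≤ j → j < m → F i j ≤ F i (j + 1))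
    (hFE : ∀ i, 1 ≤ i → i ≤ n → F i m ≤ E (i + 1))
    (hfF : ∀ i j, 1 ≤ i → i ≤ n → 1 ≤ j → j ≤ m → ¬ MemAddNSMul (F i j) p (f i j))
    (hfmem : ∀ i j, 1 ≤ i → i ≤ n → 1 ≤ j → j < m → f i j ∈ F i (j + 1))
    (hfE : ∀ i, 1 ≤ i → i ≤ n → f i m ∈ E (i + 1)) :
    ∀ η : ℕ → ℕ, (∀ i, 1 ≤ i → i ≤ n → 1 ≤ η i ∧ η i ≤ m) →
      ∃ a : G, ∀ i j, 1 ≤ i → i ≤ n → 1 ≤ j → j ≤ m →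
        (MemAddNSMul (E i) (p ^ (i + 1)) (a - p ^ i • f i j) ↔ j = η i) := by
  intro η hη
  -- monotonicity of the E chain
  have Emono : ∀ k i : ℕ, 1 ≤ k → k ≤ i → i ≤ n + 1 → E k ≤ E i := by
    intro k i hk hki hin
    induction i with
    | zero => omega
    | succ i ih =>
      rcases Nat.eq_or_lt_of_le hki with h | h
      · exact le_of_eq (by rw [h])
      · exact le_trans (ih (by omega) (by omega)) (hEchain i (by omega) (by omega))
  -- monotonicity of the F chains
  have Fmono : ∀ i j j' : ℕ, 1 ≤ i → i ≤ n → 1 ≤ j → j ≤ j' → j' ≤ m → F i j ≤ F i j' := by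
    intro i j j' hi1 hin hj1 hjj' hj'm
    induction j' with
    | zero => omega
    | succ j' ih =>
      rcases Nat.eq_or_lt_of_le hjj' with h | h
      · exact le_of_eq (by rw [h])
      · exact le_trans (ih (by omega) (by omega)) (hFchain i j' hi1 hin (by omega) (by omega))
  -- each chosen witness lands in the next E
  have hfe : ∀ k, 1 ≤ k → k ≤ n → f k (η k) ∈ E (k + 1) := by
    intro k hk1 hkn
    obtain ⟨hηk1, hηkm⟩ := hη k hk1 hkn
    rcases eq_or_lt_of_le hηkm with h | h
    · rw [h]; exact hfE k hk1 hkn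
    · have h1 : f k (η k) ∈ F k (η k + 1) := hfmem k (η k) hk1 hkn hηk1 h
      exact hFE k hk1 hkn (Fmono k (η k + 1) m hk1 hkn (by omega) (by omega) le_rfl h1)
  -- key non-membership lemma
  have keyB : ∀ i j₁ j₂ : ℕ, 1 ≤ i → i ≤ n → 1 ≤ j₁ → j₁ < j₂ → j₂ ≤ m →
      ¬ MemAddNSMul (E i) (p ^ (i + 1)) (p ^ i • (f i j₂ - f i j₁)) := by
    rintro i j₁ j₂ hi1 hin hj1 hlt hj2m ⟨e, he, g, heq⟩
    have hps : (p : ℕ) ^ (i + 1) • g = p ^ i • (p • g) := by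
      rw [pow_succ, mul_smul]
    have hx : e = p ^ i • (f i j₂ - f i j₁ - p • g) := by
      have h2 : p ^ i • (f i j₂ - f i j₁ - p • g)
          = p ^ i • (f i j₂ - f i j₁) - p ^ (i + 1) • g := by
        rw [smul_sub, hps]
      rw [h2, heq]; abel
    have hxE : f i j₂ - f i j₁ - p • g ∈ E i :=
      conv_of_nsmul_mem (hEconv i hi1 (by omega)) (Nat.one_le_pow _ _ hp.pos) (hx ▸ he)
    have hf1 : f i j₁ ∈ F i j₂ :=
      Fmono i (j₁ + 1) j₂ hi1 hin (by omega) (by omega) hj2m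
        (hfmem i j₁ hi1 hin hj1 (by omega))
    have hEF2 : E i ≤ F i j₂ :=
      le_trans (hEF i hi1 hin) (Fmono i 1 j₂ hi1 hin le_rfl (by omega) hj2m)
    exact hfF i j₂ hi1 hin (by omega) hj2m
      ⟨f i j₂ - f i j₁ - p • g + f i j₁, (F i j₂).add_mem (hEF2 hxE) hf1, g, by abel⟩
  refine ⟨∑ k ∈ Finset.Icc 1 n, p ^ k • f k (η k), ?_⟩
  intro i j hi1 hin hj1 hjm
  obtain ⟨i', rfl⟩ : ∃ i', i = i' + 1 := ⟨i - 1, by omega⟩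
  set S1 := ∑ k ∈ Finset.Ioc 0 i', p ^ k • f k (η k) with hS1def
  set S2 := ∑ k ∈ Finset.Ioc (i' + 1) n, p ^ k • f k (η k) with hS2def
  have ha : (∑ k ∈ Finset.Icc 1 n, p ^ k • f k (η k))
      = S1 + p ^ (i' + 1) • f (i' + 1) (η (i' + 1)) + S2 := by
    rw [show Finset.Icc 1 n = Finset.Ioc 0 n from (Finset.Icc_add_one_left_eq_Ioc 0 n).symm ▸ rfl]
    rw [← Finset.sum_Ioc_consecutive _ (Nat.zero_le (i' + 1)) (by omega : i' + 1 ≤ n)]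
    congr 1
    exact Finset.sum_Ioc_succ_top (Nat.zero_le i') _
  have hS1 : S1 ∈ E (i' + 1) := by
    refine AddSubgroup.sum_mem _ ?_
    intro k hk
    simp only [Finset.mem_Ioc] at hk
    have := hfe k hk.1 (by omega)
    exact AddSubgroup.nsmul_mem _
      (Emono (k + 1) (i' + 1) (by omega) (by omega) (by omega) this) _
  obtain ⟨g0, hg0⟩ : ∃ g0 : G, S2 = p ^ (i' + 1 + 1) • g0 := by
    refine ⟨∑ k ∈ Finset.Ioc (i' + 1) n, p ^ (k - (i' + 2)) • f k (η k), ?_⟩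
    rw [Finset.smul_sum]
    apply Finset.sum_congr rfl
    intro k hk
    simp only [Finset.mem_Ioc] at hk
    rw [smul_smul, ← pow_add]
    congr 1
    congr 1
    omega
  constructor
  · rintro ⟨e, he, g, heq⟩
    by_contra hne
    rw [ha, hg0] at heq
    have hkey : p ^ (i' + 1) • f (i' + 1) (η (i' + 1)) - p ^ (i' + 1) • f (i' + 1) j
        = (e - S1) + (p ^ (i' + 1 + 1) • g - p ^ (i' + 1 + 1) • g0) := by
      calc p ^ (i' + 1) • f (i' + 1) (η (i' + 1)) - p ^ (i' + 1) • f (i' + 1) j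
          = (S1 + p ^ (i' + 1) • f (i' + 1) (η (i' + 1)) + p ^ (i' + 1 + 1) • g0
              - p ^ (i' + 1) • f (i' + 1) j) - S1 - p ^ (i' + 1 + 1) • g0 := by abel
        _ = (e + p ^ (i' + 1 + 1) • g) - S1 - p ^ (i' + 1 + 1) • g0 := by rw [heq]
        _ = (e - S1) + (p ^ (i' + 1 + 1) • g - p ^ (i' + 1 + 1) • g0) := by abel
    rcases Nat.lt_or_ge j (η (i' + 1)) with hlt | hge
    · refine keyB (i' + 1) j (η (i' + 1)) hi1 hin hj1 hlt (hη (i' + 1) hi1 hin).2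
        ⟨e - S1, (E (i' + 1)).sub_mem he hS1, g - g0, ?_⟩
      rw [smul_sub, smul_sub]
      exact hkey
    · have hlt : η (i' + 1) < j := by
        rcases Nat.lt_or_ge (η (i' + 1)) j with h | h
        · exact h
        · omega
      refine keyB (i' + 1) (η (i' + 1)) j hi1 hin (hη (i' + 1) hi1 hin).1 hlt hjm
        ⟨S1 - e, (E (i' + 1)).sub_mem hS1 he, g0 - g, ?_⟩
      rw [smul_sub, smul_sub]
      calc p ^ (i' + 1) • f (i' + 1) j - p ^ (i' + 1) • f (i' + 1) (η (i' + 1))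
          = -(p ^ (i' + 1) • f (i' + 1) (η (i' + 1)) - p ^ (i' + 1) • f (i' + 1) j) := by abel
        _ = -((e - S1) + (p ^ (i' + 1 + 1) • g - p ^ (i' + 1 + 1) • g0)) := by rw [hkey]
        _ = (S1 - e) + (p ^ (i' + 1 + 1) • g0 - p ^ (i' + 1 + 1) • g) := by abel
  · intro hj
    refine ⟨S1, hS1, g0, ?_⟩
    rw [hj, ha, hg0]; abel
end

section
/- Let G be a linearly ordered abelian group, H a convex subgroup of G, p and k positive integers, ℓ a positive integer, and a', t, x ∈ G with t - p•a' ∈ H. Then (p·k)•x - t ∈ H + p^ℓ G if and only if k•x - a' ∈ H + p^{ℓ-1}G. -/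
/-- If `p • y` lies in a convex subgroup `H` with `p > 0`, then `y ∈ H`. -/
lemma mem_of_nsmul_mem_s10 {G : Type*} [AddCommGroup G] [LinearOrder G] [IsOrderedAddMonoid G]
    {H : AddSubgroup G} (hH : IsConvexSubgroup H) {p : ℕ} (hp : 0 < p)
    {y : G} (hy : p • y ∈ H) : y ∈ H := by
  rcases le_total 0 y with h0 | h0
  · refine hH y (p • y) hy h0 ?_
    calc y = 1 • y := (one_nsmul y).symm
    _ ≤ p • y := nsmul_le_nsmul_left h0 hp
  · have : p • (-y) ∈ H := by
      rw [smul_neg]; exact H.neg_mem hy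
    have := hH (-y) (p • (-y)) this (neg_nonneg.mpr h0) (by
      calc -y = 1 • (-y) := (one_nsmul _).symm
      _ ≤ p • (-y) := nsmul_le_nsmul_left (neg_nonneg.mpr h0) hp)
    simpa using H.neg_mem this

/-- If `t - p•a' ∈ H` with `H` convex, then
`(pk)•x - t ∈ H + p^ℓ G` iff `k•x - a' ∈ H + p^{ℓ-1} G`. -/
theorem reduce_coefficient {G : Type*} [AddCommGroup G] [LinearOrder G] [IsOrderedAddMonoid G]
    (H : AddSubgroup G) (hH : IsConvexSubgroup H)
    (p k ℓ : ℕ) (hp : 0 < p) (hk : 0 < k) (hℓ : 0 < ℓ)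
    (a' t x : G) (ht : t - p • a' ∈ H) :
    MemAddNSMul H (p ^ ℓ) ((p * k) • x - t) ↔
      MemAddNSMul H (p ^ (ℓ - 1)) (k • x - a') := by
  have hm : ℓ = (ℓ - 1) + 1 := (Nat.succ_pred_eq_of_pos hℓ).symm
  set m := ℓ - 1 with hmdef
  have hpow : ∀ g : G, (p ^ ℓ) • g = p • (p ^ m • g) := by
    intro g; rw [hm, pow_succ', mul_smul]
  constructor
  · rintro ⟨h, hh, g, hg⟩
    refine ⟨k • x - a' - p ^ m • g, ?_, g, by abel⟩
    apply mem_of_nsmul_mem_s10 hH hp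
    have key : p • (k • x - a' - p ^ m • g) = h + (t - p • a') := by
      calc p • (k • x - a' - p ^ m • g)
          = p • (k • x) - p • a' - p • (p ^ m • g) := by rw [smul_sub, smul_sub]
        _ = (p * k) • x - p • a' - (p ^ ℓ) • g := by rw [mul_smul, hpow]
        _ = ((p * k) • x - t - (p ^ ℓ) • g) + (t - p • a') := by abel
        _ = h + (t - p • a') := by rw [hg]; abel
    rw [key]
    exact H.add_mem hh ht
  · rintro ⟨h, hh, g, hg⟩
    refine ⟨p • h + (p • a' - t), H.add_mem (AddSubgroup.nsmul_mem H hh p)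
      (by simpa using H.neg_mem ht), g, ?_⟩
    calc (p * k) • x - t = p • (k • x - a') + (p • a' - t) := by
          rw [mul_smul, smul_sub]; abel
      _ = p • (h + p ^ m • g) + (p • a' - t) := by rw [hg]
      _ = (p • h + (p • a' - t)) + (p ^ ℓ) • g := by rw [smul_add, hpow]; abel
end

section
/- Let G be a linearly ordered abelian group, A ⊆ B convex subgroups of G, n a positive integer, and z ∈ G with z ∈ B + nG and z ∉ A + nG. Then there exists a convex subgroup C of G such that: z ∉ C + nG; every convex subgroup H with z ∉ H + nG satisfies H ⊆ C (i.e., C is the greatest such subgroup); and A ⊆ C while C is strictly contained in B. -/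
lemma abs_mem_iff' {G : Type*} [AddCommGroup G] [LinearOrder G] [IsOrderedAddMonoid G] (H : AddSubgroup G) (g : G) :
    |g| ∈ H ↔ g ∈ H := by
  rcases abs_choice g with h | h
  · rw [h]
  · rw [h, neg_mem_iff]

/-- If `A ⊆ B` are convex, `z ∈ B + nG` and `z ∉ A + nG`, then the greatest convex
subgroup `C` with `z ∉ C + nG` exists and satisfies `A ⊆ C ⊊ B`. -/
theorem exists_greatest_between {G : Type*} [AddCommGroup G] [LinearOrder G] [IsOrderedAddMonoid G]
    (A B : AddSubgroup G) (hAconv : IsConvexSubgroup A) (hBconv : IsConvexSubgroup B)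
    (hAB : A ≤ B) (n : ℕ) (hn : 0 < n) (z : G)
    (hzB : MemAddNSMul B n z) (hzA : ¬ MemAddNSMul A n z) :
    ∃ C : AddSubgroup G, IsConvexSubgroup C ∧ ¬ MemAddNSMul C n z ∧
      (∀ H : AddSubgroup G, IsConvexSubgroup H → ¬ MemAddNSMul H n z → H ≤ C) ∧
      A ≤ C ∧ C < B := by
  classical
  set S : Set (AddSubgroup G) := {H | IsConvexSubgroup H ∧ ¬ MemAddNSMul H n z} with hS
  have hAS : A ∈ S := ⟨hAconv, hzA⟩
  let C : AddSubgroup G :=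
  { carrier := {g | ∃ H ∈ S, g ∈ H}
    zero_mem' := ⟨A, hAS, A.zero_mem⟩
    add_mem' := by
      rintro a b ⟨H1, hS1, h1⟩ ⟨H2, hS2, h2⟩
      rcases convex_total hS1.1 hS2.1 with h | h
      · exact ⟨H2, hS2, H2.add_mem (h h1) h2⟩
      · exact ⟨H1, hS1, H1.add_mem h1 (h h2)⟩
    neg_mem' := by
      rintro a ⟨H1, hS1, h1⟩
      exact ⟨H1, hS1, H1.neg_mem h1⟩ }
  have hCconv : IsConvexSubgroup C := by
    rintro g h ⟨H, hHS, hhH⟩ hg hgh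
    exact ⟨H, hHS, hHS.1 g h hhH hg hgh⟩
  have hCz : ¬ MemAddNSMul C n z := by
    rintro ⟨c, ⟨H, hHS, hcH⟩, g, hg⟩
    exact hHS.2 ⟨c, hcH, g, hg⟩
  have hCB : C ≤ B := by
    rintro x ⟨H, hHS, hxH⟩
    rcases convex_total hHS.1 hBconv with h | h
    · exact h hxH
    · exact absurd (by obtain ⟨b, hb, g, hg⟩ := hzB; exact ⟨b, h hb, g, hg⟩) hHS.2
  refine ⟨C, hCconv, hCz, ?_, ?_, lt_of_le_of_ne hCB ?_⟩
  · intro H hHc hHz x hx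
    exact ⟨H, ⟨hHc, hHz⟩, hx⟩
  · intro x hx; exact ⟨A, hAS, hx⟩
  · rintro rfl
    exact hCz hzB
end

section
/- Let p be a prime, let ℤ_{(p)} be the subring of ℚ consisting of all rationals expressible as a/b with a, b integers and b not divisible by p, let B be a subset of ℝ that is linearly independent over ℤ_{(p)} (viewing ℝ as a ℤ_{(p)}-module via ℤ_{(p)} ⊆ ℚ ⊆ ℝ), and let G_p be the additive subgroup of ℝ underlying the ℤ_{(p)}-submodule spanned by B. Then for every natural number j and all distinct b, b' ∈ B, the elements p^j•b and p^j•b' lie in distinct cosets of p^{j+1}G_p; that is, p^j•b - p^j•b' ∉ p^{j+1}G_p. -/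
/-- The set of rationals expressible as `a / b` with `b` not divisible by `p`,
i.e. the localization `ℤ_{(p)}` realized inside `ℚ`. -/
def ZLocSet (p : ℕ) : Set ℚ :=
  {q : ℚ | ∃ a b : ℤ, ¬ (p : ℤ) ∣ b ∧ q = (a : ℚ) / (b : ℚ)}

/-- The additive subgroup of `ℝ` underlying the `ℤ_{(p)}`-submodule spanned by `B`:
the additive closure of all products `q * b` with `q ∈ ℤ_{(p)}` and `b ∈ B`. -/
def GpSubgroup (p : ℕ) (B : Set ℝ) : AddSubgroup ℝ :=
  AddSubgroup.closure {y : ℝ | ∃ q ∈ ZLocSet p, ∃ b ∈ B, y = (q : ℝ) * b}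

/-- `B ⊆ ℝ` is linearly independent over `ℤ_{(p)}`: any finite `ℤ_{(p)}`-linear
combination of elements of `B` which vanishes has all coefficients zero. -/
def LinIndepOverZLoc (p : ℕ) (B : Set ℝ) : Prop :=
  ∀ (t : Finset ℝ) (c : ℝ → ℚ), ↑t ⊆ B → (∀ x ∈ t, c x ∈ ZLocSet p) →
    (∑ x ∈ t, (c x : ℝ) * x) = 0 → ∀ x ∈ t, c x = 0

lemma zloc_int (p : ℕ) (hp : p.Prime) (n : ℤ) : (n : ℚ) ∈ ZLocSet p := by
  refine ⟨n, 1, ?_, by simp⟩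
  intro h
  rcases Int.isUnit_iff.mp (isUnit_of_dvd_one h) with h1 | h1
  · exact hp.ne_one (by exact_mod_cast h1)
  · have : (0 : ℤ) ≤ (p : ℤ) := Int.natCast_nonneg p
    omega

lemma zloc_zero (p : ℕ) (hp : p.Prime) : (0 : ℚ) ∈ ZLocSet p := by
  simpa using zloc_int p hp 0

lemma zloc_ne_zero {p : ℕ} {b : ℤ} (hp : p.Prime) (h : ¬ (p : ℤ) ∣ b) : b ≠ 0 := by
  rintro rfl; exact h (dvd_zero _)

lemma zloc_add (p : ℕ) (hp : p.Prime) {q q' : ℚ} (h : q ∈ ZLocSet p)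
    (h' : q' ∈ ZLocSet p) : q + q' ∈ ZLocSet p := by
  obtain ⟨a, b, hb, rfl⟩ := h
  obtain ⟨a', b', hb', rfl⟩ := h'
  refine ⟨a * b' + a' * b, b * b', ?_, ?_⟩
  · intro hd
    rcases (Int.Prime.dvd_mul' (by exact_mod_cast hp) hd) with h | h
    exacts [hb h, hb' h]
  · have hb0 : (b : ℚ) ≠ 0 := by exact_mod_cast zloc_ne_zero hp hb
    have hb0' : (b' : ℚ) ≠ 0 := by exact_mod_cast zloc_ne_zero hp hb'
    push_cast
    field_simp

lemma zloc_neg (p : ℕ) {q : ℚ} (h : q ∈ ZLocSet p) : -q ∈ ZLocSet p := by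
  obtain ⟨a, b, hb, rfl⟩ := h
  exact ⟨-a, b, hb, by rw [Int.cast_neg, neg_div]⟩

lemma zloc_mul (p : ℕ) (hp : p.Prime) {q q' : ℚ} (h : q ∈ ZLocSet p)
    (h' : q' ∈ ZLocSet p) : q * q' ∈ ZLocSet p := by
  obtain ⟨a, b, hb, rfl⟩ := h
  obtain ⟨a', b', hb', rfl⟩ := h'
  refine ⟨a * a', b * b', ?_, ?_⟩
  · intro hd
    rcases (Int.Prime.dvd_mul' (by exact_mod_cast hp) hd) with h | h
    exacts [hb h, hb' h]
  · push_cast; rw [div_mul_div_comm]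

lemma zloc_sub (p : ℕ) (hp : p.Prime) {q q' : ℚ} (h : q ∈ ZLocSet p)
    (h' : q' ∈ ZLocSet p) : q - q' ∈ ZLocSet p := by
  simpa [sub_eq_add_neg] using zloc_add p hp h (zloc_neg p h')

/-- Every element of `GpSubgroup p B` is a finite `ℤ_{(p)}`-combination of elements of `B`. -/
lemma gp_repr (p : ℕ) (hp : p.Prime) (B : Set ℝ) {g : ℝ} (hg : g ∈ GpSubgroup p B) :
    ∃ (t : Finset ℝ) (c : ℝ → ℚ), ↑t ⊆ B ∧ (∀ x ∈ t, c x ∈ ZLocSet p) ∧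
      g = ∑ x ∈ t, (c x : ℝ) * x := by
  induction hg using AddSubgroup.closure_induction with
  | mem y hy =>
    obtain ⟨q, hq, x, hx, rfl⟩ := hy
    exact ⟨{x}, fun _ => q, by simpa using hx, fun _ _ => hq, by simp⟩
  | zero => exact ⟨∅, fun _ => 0, by simp, by simp, by simp⟩
  | add y z _ _ hy hz =>
    obtain ⟨t1, c1, ht1, hc1, rfl⟩ := hy
    obtain ⟨t2, c2, ht2, hc2, rfl⟩ := hz
    refine ⟨t1 ∪ t2, fun x => (if x ∈ t1 then c1 x else 0) + (if x ∈ t2 then c2 x else 0),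
      ?_, ?_, ?_⟩
    · intro x hx
      rcases Finset.mem_union.mp (by exact_mod_cast hx) with h | h
      exacts [ht1 h, ht2 h]
    · intro x _
      apply zloc_add p hp <;> split <;>
        first | exact hc1 _ ‹_› | exact hc2 _ ‹_› | exact zloc_zero p hp
    · symm
      push_cast
      simp_rw [apply_ite (Rat.cast (K := ℝ)), Rat.cast_zero, add_mul]
      rw [Finset.sum_add_distrib]
      congr 1
      · rw [← Finset.sum_subset Finset.subset_union_left
          (fun x _ hx => by simp [hx])]
        exact Finset.sum_congr rfl (fun x hx => by simp [hx])
      · rw [← Finset.sum_subset Finset.subset_union_right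
          (fun x _ hx => by simp [hx])]
        exact Finset.sum_congr rfl (fun x hx => by simp [hx])
  | neg y _ hy =>
    obtain ⟨t, c, ht, hc, rfl⟩ := hy
    exact ⟨t, fun x => -c x, ht, fun x hx => zloc_neg p (hc x hx),
      by push_cast; rw [← Finset.sum_neg_distrib]; exact Finset.sum_congr rfl (fun x _ => by ring)⟩

/-- For distinct `b, b' ∈ B`, the elements `p^j • b` and `p^j • b'` lie in distinct
cosets of `p^{j+1} G_p`. -/
theorem distinct_cosets (p : ℕ) (hp : p.Prime) (B : Set ℝ)
    (hind : LinIndepOverZLoc p B) (j : ℕ) (b b' : ℝ)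
    (hb : b ∈ B) (hb' : b' ∈ B) (hne : b ≠ b') :
    ¬ ∃ g ∈ GpSubgroup p B, p ^ j • b - p ^ j • b' = p ^ (j + 1) • g := by
  rintro ⟨g, hg, heq⟩
  obtain ⟨t, c, htB, hc, rfl⟩ := gp_repr p hp B hg
  set t' : Finset ℝ := insert b (insert b' t) with ht'
  set d : ℝ → ℚ := fun x =>
    (if x = b then (p : ℚ) ^ j else 0) - (if x = b' then (p : ℚ) ^ j else 0)
      - (p : ℚ) ^ (j + 1) * (if x ∈ t then c x else 0) with hd
  have ht'B : ↑t' ⊆ B := by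
    intro x hx
    simp only [ht', Finset.coe_insert, Set.mem_insert_iff] at hx
    rcases hx with rfl | rfl | hx
    exacts [hb, hb', htB hx]
  have hdz : ∀ x ∈ t', d x ∈ ZLocSet p := by
    intro x _
    apply zloc_sub p hp
    apply zloc_sub p hp
    · split
      · exact_mod_cast zloc_int p hp ((p : ℤ) ^ j)
      · exact zloc_zero p hp
    · split
      · exact_mod_cast zloc_int p hp ((p : ℤ) ^ j)
      · exact zloc_zero p hp
    · apply zloc_mul p hp
      · exact_mod_cast zloc_int p hp ((p : ℤ) ^ (j + 1))
      · split
        · exact hc _ ‹_›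
        · exact zloc_zero p hp
  have hsum : (∑ x ∈ t', (d x : ℝ) * x) = 0 := by
    have e1 : ∀ (v : ℝ), v ∈ t' → (∑ x ∈ t', (if x = v then ((p : ℝ) ^ j) else 0) * x)
        = (p : ℝ) ^ j * v := by
      intro v hv
      rw [Finset.sum_eq_single v (fun x _ hx => by simp [hx]) (fun h => absurd hv h)]
      simp
    have e2 : (∑ x ∈ t', (if x ∈ t then ((c x : ℝ)) else 0) * x)
        = ∑ x ∈ t, (c x : ℝ) * x := by
      have hsub : t ⊆ t' := fun x hx => by simp [ht', hx]
      rw [← Finset.sum_subset hsub (fun x _ hx => by simp [hx])]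
      exact Finset.sum_congr rfl (fun x hx => by simp [hx])
    have hb't' : b' ∈ t' := by simp [ht']
    have hbt' : b ∈ t' := by simp [ht']
    calc (∑ x ∈ t', (d x : ℝ) * x)
        = (∑ x ∈ t', (if x = b then ((p : ℝ) ^ j) else 0) * x)
          - (∑ x ∈ t', (if x = b' then ((p : ℝ) ^ j) else 0) * x)
          - (p : ℝ) ^ (j + 1) * (∑ x ∈ t', (if x ∈ t then ((c x : ℝ)) else 0) * x) := by
          rw [Finset.mul_sum, ← Finset.sum_sub_distrib, ← Finset.sum_sub_distrib]
          refine Finset.sum_congr rfl (fun x _ => ?_)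
          simp only [hd]
          push_cast
          simp only [apply_ite (Rat.cast (K := ℝ)), Rat.cast_zero, Rat.cast_pow, Rat.cast_natCast]
          split <;> split <;> split <;> push_cast <;> ring
      _ = (p : ℝ) ^ j * b - (p : ℝ) ^ j * b'
          - (p : ℝ) ^ (j + 1) * (∑ x ∈ t, (c x : ℝ) * x) := by
          rw [e1 b hbt', e1 b' hb't', e2]
      _ = 0 := by
          have := heq
          simp only [nsmul_eq_mul] at this
          push_cast at this ⊢
          linarith [this]
  have hdb : d b = 0 := hind t' d ht'B hdz hsum b (by simp [ht'])
  have hdb' : (p : ℚ) ^ j - (p : ℚ) ^ (j + 1) * (if b ∈ t then c b else 0) = 0 := by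
    rw [mul_ite, mul_zero]
    simpa [hd, hne] using hdb
  set c0 : ℚ := if b ∈ t then c b else 0 with hc0
  have hc0z : c0 ∈ ZLocSet p := by
    rw [hc0]; split
    · exact hc _ ‹_›
    · exact zloc_zero p hp
  have hp0 : (p : ℚ) ≠ 0 := by exact_mod_cast hp.ne_zero
  have h1 : (p : ℚ) ^ (j + 1) * c0 = (p : ℚ) ^ j := by linarith
  have h2 : (p : ℚ) * c0 = 1 :=
    mul_left_cancel₀ (pow_ne_zero j hp0)
      (show (p : ℚ) ^ j * ((p : ℚ) * c0) = (p : ℚ) ^ j * 1 by linear_combination h1)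
  obtain ⟨a, bb, hbb, hab⟩ := hc0z
  have hbb0 : (bb : ℚ) ≠ 0 := by exact_mod_cast zloc_ne_zero hp hbb
  rw [hab] at h2
  have h3 : (p : ℚ) * a = bb := by field_simp at h2; linarith
  have h4 : (p : ℤ) * a = bb := by exact_mod_cast h3
  exact hbb ⟨a, h4.symm⟩
end

section
/- Let p be a prime, let ℤ_{(p)} be the subring of ℚ consisting of all rationals expressible as a/b with a, b integers and b not divisible by p, let B be an infinite subset of ℝ linearly independent over ℤ_{(p)} (viewing ℝ as a ℤ_{(p)}-module via ℤ_{(p)} ⊆ ℚ ⊆ ℝ), and let G_p be the additive subgroup of ℝ underlying the ℤ_{(p)}-submodule spanned by B. For a positive integer k, let G := G_p^k be the direct sum of k copies of G_p (with componentwise addition). Then the quotient G / pG is infinite, and for every prime q ≠ p, qG = G. (That is, p is the unique singular prime of G_p^k.) -/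
variable {p : ℕ}

lemma ZLoc_not_dvd_one (hp : p.Prime) : ¬ ((p:ℤ) ∣ (1:ℤ)) := by
  intro h
  have h1 := Int.le_of_dvd one_pos h
  have h2 : (2:ℤ) ≤ p := by exact_mod_cast hp.two_le
  omega

lemma ZLoc_ne_zero {b : ℤ} (h : ¬ (p:ℤ) ∣ b) : b ≠ 0 := by
  rintro rfl; exact h (dvd_zero _)

lemma ZLoc_zero (hp : p.Prime) : (0:ℚ) ∈ ZLocSet p :=
  ⟨0, 1, ZLoc_not_dvd_one hp, by simp⟩

lemma ZLoc_one (hp : p.Prime) : (1:ℚ) ∈ ZLocSet p :=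
  ⟨1, 1, ZLoc_not_dvd_one hp, by simp⟩

lemma ZLoc_natCast (hp : p.Prime) (n : ℕ) : ((n:ℚ)) ∈ ZLocSet p :=
  ⟨n, 1, ZLoc_not_dvd_one hp, by simp⟩

lemma ZLoc_add (hp : p.Prime) {x y : ℚ} (hx : x ∈ ZLocSet p) (hy : y ∈ ZLocSet p) :
    x + y ∈ ZLocSet p := by
  obtain ⟨a, b, hb, rfl⟩ := hx
  obtain ⟨a', b', hb', rfl⟩ := hy
  have hb0 : (b:ℚ) ≠ 0 := Int.cast_ne_zero.mpr (ZLoc_ne_zero hb)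
  have hb'0 : (b':ℚ) ≠ 0 := Int.cast_ne_zero.mpr (ZLoc_ne_zero hb')
  refine ⟨a * b' + a' * b, b * b', ?_, ?_⟩
  · intro h
    rcases (Int.Prime.dvd_mul' (by exact_mod_cast hp) h) with h | h
    exacts [hb h, hb' h]
  · push_cast
    rw [div_add_div _ _ hb0 hb'0]; ring_nf

lemma ZLoc_neg {x : ℚ} (hx : x ∈ ZLocSet p) : -x ∈ ZLocSet p := by
  obtain ⟨a, b, hb, rfl⟩ := hx
  exact ⟨-a, b, hb, by push_cast; ring⟩

lemma ZLoc_mul (hp : p.Prime) {x y : ℚ} (hx : x ∈ ZLocSet p) (hy : y ∈ ZLocSet p) :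
    x * y ∈ ZLocSet p := by
  obtain ⟨a, b, hb, rfl⟩ := hx
  obtain ⟨a', b', hb', rfl⟩ := hy
  refine ⟨a * a', b * b', ?_, by push_cast; rw [div_mul_div_comm]⟩
  intro h
  rcases (Int.Prime.dvd_mul' (by exact_mod_cast hp) h) with h | h
  exacts [hb h, hb' h]

lemma ZLoc_div_prime (hp : p.Prime) {q : ℕ} (hq : q.Prime) (hqp : q ≠ p) {x : ℚ}
    (hx : x ∈ ZLocSet p) : x / q ∈ ZLocSet p := by
  obtain ⟨a, b, hb, rfl⟩ := hx
  refine ⟨a, b * q, ?_, by push_cast; rw [div_div]⟩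
  intro h
  rcases (Int.Prime.dvd_mul' (by exact_mod_cast hp) h) with h | h
  · exact hb h
  · have : p ∣ q := by exact_mod_cast h
    exact hqp ((Nat.prime_dvd_prime_iff_eq hp hq).mp this).symm

/-- Every element of `G_p` is a finite `ℤ_{(p)}`-linear combination of elements of `B`. -/
lemma Gp_rep (hp : p.Prime) {B : Set ℝ} {x : ℝ} (hx : x ∈ GpSubgroup p B) :
    ∃ (t : Finset ℝ) (c : ℝ → ℚ), ↑t ⊆ B ∧ (∀ y, c y ∈ ZLocSet p) ∧ (∀ y ∉ t, c y = 0) ∧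
      x = ∑ y ∈ t, (c y : ℝ) * y := by
  induction hx using AddSubgroup.closure_induction with
  | mem y hy =>
    obtain ⟨q, hq, b, hb, rfl⟩ := hy
    classical
    refine ⟨{b}, fun z => if z = b then q else 0, by simpa using hb, ?_, ?_, by simp⟩
    · intro z
      by_cases h : z = b <;> simp [h, hq, ZLoc_zero hp]
    · intro z hz
      simp only [Finset.mem_singleton] at hz
      simp [hz]
  | zero => exact ⟨∅, fun _ => 0, by simp, fun _ => ZLoc_zero hp, by simp, by simp⟩
  | add x y hx hy ihx ihy =>
    classical
    obtain ⟨t, c, htB, hcZ, hc0, rfl⟩ := ihx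
    obtain ⟨t', c', htB', hcZ', hc0', rfl⟩ := ihy
    refine ⟨t ∪ t', c + c', ?_, fun y => ZLoc_add hp (hcZ y) (hcZ' y), ?_, ?_⟩
    · push_cast; exact Set.union_subset htB htB'
    · intro y hy
      simp only [Finset.mem_union, not_or] at hy
      simp [Pi.add_apply, hc0 y hy.1, hc0' y hy.2]
    · have h1 : ∑ y ∈ t, (c y : ℝ) * y = ∑ y ∈ t ∪ t', (c y : ℝ) * y := by
        refine (Finset.sum_subset (f := fun y => (c y : ℝ) * y) Finset.subset_union_left ?_)
        intro y _ hy; simp [hc0 y hy]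
      have h2 : ∑ y ∈ t', (c' y : ℝ) * y = ∑ y ∈ t ∪ t', (c' y : ℝ) * y := by
        refine (Finset.sum_subset (f := fun y => (c' y : ℝ) * y) (Finset.subset_union_right (s₁ := t)) ?_)
        intro y _ hy; simp [hc0' y hy]
      rw [h1, h2, ← Finset.sum_add_distrib]
      refine Finset.sum_congr rfl fun y _ => ?_; simp only [Pi.add_apply]; push_cast; ring
  | neg x hx ihx =>
    obtain ⟨t, c, htB, hcZ, hc0, rfl⟩ := ihx
    refine ⟨t, -c, htB, fun y => ZLoc_neg (hcZ y), fun y hy => by simp [hc0 y hy], ?_⟩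
    rw [← Finset.sum_neg_distrib]
    refine Finset.sum_congr rfl fun y _ => ?_; simp only [Pi.neg_apply]; push_cast; ring

/-- `p` is the unique singular prime of `G_p^k`: the quotient `G/pG` is infinite,
and `qG = G` for any prime `q ≠ p`. -/
theorem Gp_pow_singular_primes (p : ℕ) (hp : p.Prime) (B : Set ℝ) (hB : B.Infinite)
    (hind : LinIndepOverZLoc p B) (k : ℕ) (hk : 0 < k) :
    Infinite ((Fin k → (GpSubgroup p B)) ⧸ nSMulSubgroup (Fin k → (GpSubgroup p B)) p) ∧
    ∀ q : ℕ, q.Prime → q ≠ p →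
      nSMulSubgroup (Fin k → (GpSubgroup p B)) q = ⊤ := by
  classical
  constructor
  · -- `G/pG` is infinite
    have i0 : Fin k := ⟨0, hk⟩
    have hmemB : ∀ b ∈ B, b ∈ GpSubgroup p B := fun b hb =>
      AddSubgroup.subset_closure ⟨1, ZLoc_one hp, b, hb, by simp⟩
    let φ : B → (Fin k → (GpSubgroup p B)) ⧸ nSMulSubgroup (Fin k → (GpSubgroup p B)) p :=
      fun b => QuotientAddGroup.mk (Pi.single i0 ⟨b.1, hmemB b.1 b.2⟩)
    have hinj : Function.Injective φ := by
      intro b b' h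
      have hmem : Pi.single i0 (⟨b.1, hmemB b.1 b.2⟩ : GpSubgroup p B) -
          Pi.single i0 (⟨b'.1, hmemB b'.1 b'.2⟩ : GpSubgroup p B) ∈
          nSMulSubgroup (Fin k → (GpSubgroup p B)) p := by
        rwa [QuotientAddGroup.eq_iff_sub_mem] at h
      obtain ⟨g, hg⟩ := hmem
      have hg0 := congrFun hg i0
      simp only [Pi.smul_apply, Pi.sub_apply, Pi.single_eq_same] at hg0
      have hpg : (p : ℝ) * ((g i0 : ℝ)) = b.1 - b'.1 := by
        have := congrArg (Subtype.val) hg0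
        push_cast at this
        simpa [nsmul_eq_mul] using this
      obtain ⟨t, c, htB, hcZ, hc0, hrep⟩ := Gp_rep hp (g i0).2
      set t' : Finset ℝ := insert b.1 (insert b'.1 t) with ht'
      have hbt' : b.1 ∈ t' := Finset.mem_insert_self _ _
      have hb't' : b'.1 ∈ t' := Finset.mem_insert_of_mem (Finset.mem_insert_self _ _)
      have htt' : t ⊆ t' := fun y hy => Finset.mem_insert_of_mem (Finset.mem_insert_of_mem hy)
      set d : ℝ → ℚ := fun y =>
        (if y = b.1 then 1 else 0) - (if y = b'.1 then 1 else 0) - p * c y with hd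
      have hsum_t' : ∑ y ∈ t', (c y : ℝ) * y = (g i0 : ℝ) := by
        rw [hrep]
        refine (Finset.sum_subset htt' ?_).symm
        intro y _ hy; simp [hc0 y hy]
      have key : ∑ y ∈ t', (d y : ℝ) * y = 0 := by
        have : ∀ y ∈ t', (d y : ℝ) * y =
            (if y = b.1 then y else 0) - (if y = b'.1 then y else 0)
              - (p : ℝ) * ((c y : ℝ) * y) := by
          intro y _
          simp only [hd]
          push_cast
          split_ifs <;> ring
        rw [Finset.sum_congr rfl this, Finset.sum_sub_distrib, Finset.sum_sub_distrib,
          ← Finset.mul_sum, Finset.sum_ite_eq' t' b.1 (fun y => y),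
          Finset.sum_ite_eq' t' b'.1 (fun y => y), if_pos hbt', if_pos hb't', hsum_t', hpg]
        ring
      have ht'B : ↑t' ⊆ B := by
        intro y hy
        simp only [ht', Finset.coe_insert, Set.mem_insert_iff] at hy
        rcases hy with rfl | rfl | hy
        · exact b.2
        · exact b'.2
        · exact htB hy
      have hdZ : ∀ y ∈ t', d y ∈ ZLocSet p := by
        intro y _
        have h1 : (if y = b.1 then (1:ℚ) else 0) ∈ ZLocSet p := by
          split_ifs; exacts [ZLoc_one hp, ZLoc_zero hp]
        have h2 : (if y = b'.1 then (1:ℚ) else 0) ∈ ZLocSet p := by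
          split_ifs; exacts [ZLoc_one hp, ZLoc_zero hp]
        have h3 : (p : ℚ) * c y ∈ ZLocSet p := ZLoc_mul hp (ZLoc_natCast hp p) (hcZ y)
        simpa [hd, sub_eq_add_neg] using ZLoc_add hp (ZLoc_add hp h1 (ZLoc_neg h2)) (ZLoc_neg h3)
      have hdb := hind t' d ht'B hdZ key b.1 hbt'
      by_contra hne
      have hne' : b.1 ≠ b'.1 := fun hE => hne (Subtype.ext hE)
      rw [hd] at hdb
      simp only [if_pos rfl, if_neg hne', if_true, sub_zero] at hdb
      have hpc : (p : ℚ) * c b.1 = 1 := by linarith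
      obtain ⟨a, bb, hbb, hc⟩ := hcZ b.1
      have hbb0 : (bb : ℚ) ≠ 0 := Int.cast_ne_zero.mpr (ZLoc_ne_zero hbb)
      rw [hc] at hpc
      have : (p : ℚ) * a = bb := by field_simp at hpc; exact_mod_cast hpc
      have : (bb : ℤ) = p * a := by exact_mod_cast this.symm
      exact hbb ⟨a, this⟩
    haveI := hB.to_subtype
    exact Infinite.of_injective φ hinj
  · -- `qG = G` for primes `q ≠ p`
    intro q hq hqp
    have key : ∀ v : GpSubgroup p B, ∃ w : GpSubgroup p B, q • w = v := by
      intro v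
      have main : ∀ r : ℝ, r ∈ GpSubgroup p B →
          ∃ w, w ∈ GpSubgroup p B ∧ (q : ℝ) * w = r := by
        intro r hr
        induction hr using AddSubgroup.closure_induction with
        | mem y hy =>
          obtain ⟨c, hc, b, hb, rfl⟩ := hy
          refine ⟨((c / q : ℚ) : ℝ) * b,
            AddSubgroup.subset_closure ⟨c / q, ZLoc_div_prime hp hq hqp hc, b, hb, rfl⟩, ?_⟩
          have hq0 : (q : ℝ) ≠ 0 := Nat.cast_ne_zero.mpr hq.pos.ne'
          push_cast
          field_simp
        | zero => exact ⟨0, zero_mem _, by simp⟩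
        | add x y hx hy ihx ihy =>
          obtain ⟨w, hw, hqw⟩ := ihx
          obtain ⟨w', hw', hqw'⟩ := ihy
          exact ⟨w + w', add_mem hw hw', by rw [mul_add, hqw, hqw']⟩
        | neg x hx ihx =>
          obtain ⟨w, hw, hqw⟩ := ihx
          exact ⟨-w, neg_mem hw, by rw [mul_neg, hqw]⟩
      obtain ⟨w, hw, hqw⟩ := main v.1 v.2
      refine ⟨⟨w, hw⟩, Subtype.ext ?_⟩
      simpa [nsmul_eq_mul] using hqw
    ext x
    simp only [AddSubgroup.mem_top, iff_true]
    choose g hg using fun i => key (x i)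
    exact ⟨g, funext fun i => by simpa using hg i⟩
end
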